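/- Let α > 2, c > 0, p_c > 0 and p_max > 0, set λ_th = (c/p_max)^{2/α}, and define S(λ) = λ(c λ^{−α/2} + p_c) for λ > 0. Then S restricted to the interval [λ_th, ∞) attains its minimum at λ_min = max(λ_th, [ (c/p_c)(α/2 − 1) ]^{2/α}), i.e. S(λ_min) ≤ S(λ) for every λ ≥ λ_th. -/

import Mathlib

open Real Set

/-- Proposition 10: on the region `λ ≥ λ_th = (c/p_max)^{2/α}`, the areal power
consumption `S(λ) = λ(c λ^{−α/2} + p_c)` is minimized at
`λ_min = max(λ_th, [(c/p_c)(α/2 − 1)]^{2/α})`. -/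
theorem stmt_9 (α c pc pmax : ℝ) (hα : 2 < α) (hc : 0 < c) (hpc : 0 < pc)
    (hpmax : 0 < pmax) :
    ∀ lam : ℝ, (c / pmax) ^ (2 / α) ≤ lam →
      (max ((c / pmax) ^ (2 / α)) ((c / pc * (α / 2 - 1)) ^ (2 / α))) *
          (c * (max ((c / pmax) ^ (2 / α)) ((c / pc * (α / 2 - 1)) ^ (2 / α)))
              ^ (-(α / 2)) + pc)
        ≤ lam * (c * lam ^ (-(α / 2)) + pc) := by
  intro lam hlam
  have hα0 : (0:ℝ) < α := by linarith
  have hhalf : (0:ℝ) < α / 2 - 1 := by linarith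
  set T : ℝ := (c / pmax) ^ (2 / α) with hT
  set L : ℝ := (c / pc * (α / 2 - 1)) ^ (2 / α) with hL
  have hbase : 0 < c / pc * (α / 2 - 1) := by positivity
  have hLpos : 0 < L := Real.rpow_pos_of_pos hbase _
  have hTpos : 0 < T := Real.rpow_pos_of_pos (by positivity) _
  have hlampos : 0 < lam := lt_of_lt_of_le hTpos hlam
  set f : ℝ → ℝ := fun x => c * x ^ (1 - α / 2) + pc * x with hf
  -- rewrite the target in terms of f
  have hrw : ∀ x : ℝ, 0 < x → x * (c * x ^ (-(α / 2)) + pc) = f x := by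
    intro x hx
    have : x * x ^ (-(α / 2)) = x ^ (1 - α / 2) := by
      rw [show (1 : ℝ) - α / 2 = 1 + -(α / 2) by ring, Real.rpow_add hx,
        Real.rpow_one]
    simp only [hf]; rw [← this]; ring
  -- value of L^(-(α/2))
  have hLval : L ^ (-(α / 2)) = (c / pc * (α / 2 - 1))⁻¹ := by
    rw [hL, ← Real.rpow_mul hbase.le, show 2 / α * -(α / 2) = -1 from
      (by field_simp), Real.rpow_neg_one]
  -- derivative of f
  have hderiv : ∀ x : ℝ, 0 < x →
      HasDerivAt f (pc - c * (α / 2 - 1) * x ^ (-(α / 2))) x := by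
    intro x hx
    have h1 : HasDerivAt (fun x : ℝ => x ^ (1 - α / 2))
        ((1 - α / 2) * x ^ (1 - α / 2 - 1)) x :=
      Real.hasDerivAt_rpow_const (Or.inl hx.ne')
    have h2 := ((h1.const_mul c).add (HasDerivAt.const_mul pc (hasDerivAt_id x)))
    refine h2.congr_deriv ?_
    rw [show (1 : ℝ) - α / 2 - 1 = -(α / 2) by ring]
    ring
  have hcont : ∀ s : Set ℝ, (∀ x ∈ s, (0:ℝ) < x) → ContinuousOn f s := by
    intro s hs
    exact (continuousOn_const.mul (continuousOn_id.rpow_const (fun x hx => Or.inl (hs x hx).ne'))).add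
      (continuousOn_const.mul continuousOn_id)
  -- sign of derivative
  have hderivval : ∀ x : ℝ, 0 < x → deriv f x = pc - c * (α / 2 - 1) * x ^ (-(α / 2)) :=
    fun x hx => (hderiv x hx).deriv
  have hLkey : c * (α / 2 - 1) * L ^ (-(α / 2)) = pc := by
    have hne : c * (α / 2 - 1) ≠ 0 := by positivity
    rw [hLval, show c / pc * (α / 2 - 1) = (c * (α / 2 - 1)) / pc by ring, inv_div,
      mul_comm, div_mul_cancel₀ _ hne]
  rcases le_or_gt (max T L) lam with hcase | hcase
  · -- monotone on [L, ∞) part: use Icc (max T L) lam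
    have hmL : L ≤ max T L := le_max_right _ _
    have hmpos : 0 < max T L := lt_of_lt_of_le hLpos hmL
    have hmono : MonotoneOn f (Icc (max T L) lam) := by
      apply monotoneOn_of_deriv_nonneg (convex_Icc _ _)
        (hcont _ (fun x hx => lt_of_lt_of_le hmpos hx.1))
      · intro x hx
        rw [interior_Icc] at hx
        exact (hderiv x (lt_trans hmpos hx.1)).differentiableAt.differentiableWithinAt
      · intro x hx
        rw [interior_Icc] at hx
        have hxpos : 0 < x := lt_trans hmpos hx.1
        rw [hderivval x hxpos]
        have hle : x ^ (-(α / 2)) ≤ L ^ (-(α / 2)) :=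
          Real.rpow_le_rpow_of_nonpos hLpos (le_of_lt (lt_of_le_of_lt hmL hx.1))
            (by linarith)
        nlinarith [mul_le_mul_of_nonneg_left hle (by positivity : (0:ℝ) ≤ c * (α / 2 - 1))]
    have := hmono ⟨le_refl _, hcase⟩ ⟨hcase, le_refl _⟩ hcase
    rw [hrw _ hmpos, hrw _ hlampos]
    exact this
  · -- lam < max T L; then max T L = L and lam ≤ L
    have hlamL : lam < L := by
      by_contra h
      push_neg at h
      exact absurd (max_le hlam h) (not_le.mpr hcase)
    have hmax : max T L = L := max_eq_right (le_trans hlam hlamL.le)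
    have hanti : AntitoneOn f (Icc lam L) := by
      apply antitoneOn_of_deriv_nonpos (convex_Icc _ _)
        (hcont _ (fun x hx => lt_of_lt_of_le hlampos hx.1))
      · intro x hx
        rw [interior_Icc] at hx
        exact (hderiv x (lt_trans hlampos hx.1)).differentiableAt.differentiableWithinAt
      · intro x hx
        rw [interior_Icc] at hx
        have hxpos : 0 < x := lt_trans hlampos hx.1
        rw [hderivval x hxpos]
        have hle : L ^ (-(α / 2)) ≤ x ^ (-(α / 2)) :=
          Real.rpow_le_rpow_of_nonpos hxpos hx.2.le (by linarith)
        nlinarith [mul_le_mul_of_nonneg_left hle (by positivity : (0:ℝ) ≤ c * (α / 2 - 1))]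
    have := hanti ⟨le_refl _, hlamL.le⟩ ⟨hlamL.le, le_refl _⟩ hlamL.le
    rw [hmax, hrw _ hLpos, hrw _ hlampos]
    exact this
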